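/- Let u, v be unit vectors in ℂ^n (n ≥ 1), with rank-one projections P_u = |u⟩⟨u| and P_v = |v⟩⟨v|. Then the operator norm of I + P_u − P_v equals 1 + √(1 − |⟨u, v⟩|²). -/

import Mathlib

open Matrix

noncomputable section

/-- The operator norm of a square complex matrix, viewed as an operator on Euclidean space
(for positive semidefinite matrices this is the largest eigenvalue). -/
def opNorm {n : ℕ} (A : Matrix (Fin n) (Fin n) ℂ) : ℝ :=
  ‖Matrix.toEuclideanCLM (𝕜 := ℂ) A‖

local notation "⟪" x ", " y "⟫" => @inner ℂ _ _ x y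

section AuxLemmas

variable {E : Type*} [NormedAddCommGroup E] [InnerProductSpace ℂ E]

lemma gram_aux {u v : E} (hu : ‖u‖ = 1) (hv : ‖v‖ = 1) (x : E) :
    ‖⟪u,x⟫‖ ^ 2 + ‖⟪v,x⟫‖ ^ 2 ≤
      (1 - ‖⟪u,v⟫‖ ^ 2) * ‖x‖ ^ 2
      + 2 * ‖⟪u,x⟫‖ * ‖⟪v,x⟫‖ * ‖⟪u,v⟫‖ := by
  set a : ℂ := ⟪u,x⟫ with ha
  set b : ℂ := ⟪v,x⟫ with hb
  set c : ℂ := ⟪u,v⟫ with hc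
  have huu : ⟪u,u⟫ = 1 := by
    rw [inner_self_eq_norm_sq_to_K, hu]; norm_num
  have hvv : ⟪v,v⟫ = 1 := by
    rw [inner_self_eq_norm_sq_to_K, hv]; norm_num
  by_cases hγ : ‖c‖ = 1
  · have hu0 : u ≠ 0 := by intro h; rw [h] at hu; simp at hu
    have hv0 : v ≠ 0 := by intro h; rw [h] at hv; simp at hv
    obtain ⟨r, hr0, hrv⟩ := (norm_inner_eq_norm_iff (𝕜 := ℂ) hu0 hv0).mp (by
      rw [hu, hv]; simpa using hγ)
    have hcr : c = r := by rw [hc, hrv, inner_smul_right, huu, mul_one]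
    have hbr : b = (starRingEnd ℂ) r * a := by rw [hb, hrv, inner_smul_left, ha]
    have habs : ‖b‖ = ‖a‖ := by
      rw [hbr, norm_mul, Complex.norm_conj, ← hcr, hγ, one_mul]
    rw [habs, hγ]
    nlinarith [sq_nonneg (‖a‖)]
  · have hcs : ‖c‖ ≤ 1 := by
      have := norm_inner_le_norm (𝕜 := ℂ) u v
      rwa [hu, hv, mul_one, ← hc] at this
    have hD : 0 < 1 - ‖c‖ ^ 2 := by
      have : ‖c‖ < 1 := lt_of_le_of_ne hcs hγ
      nlinarith [norm_nonneg c]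
    set D : ℝ := 1 - ‖c‖ ^ 2 with hDdef
    have hδ : (D:ℂ) = 1 - c * (starRingEnd ℂ) c := by
      rw [Complex.mul_conj, hDdef]
      push_cast [Complex.sq_norm]
      ring
    set z : E := (D:ℂ) • x - (a - c*b) • u - (b - (starRingEnd ℂ) c * a) • v with hz
    have hxu : ⟪x,u⟫ = (starRingEnd ℂ) a := by rw [← inner_conj_symm, ha]
    have hxv : ⟪x,v⟫ = (starRingEnd ℂ) b := by rw [← inner_conj_symm, hb]
    have hvu : ⟪v,u⟫ = (starRingEnd ℂ) c := by rw [← inner_conj_symm, hc]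
    have hzz : ⟪z,z⟫ = (D:ℂ) * ((D:ℂ) * ⟪x,x⟫ - (a - c*b) * (starRingEnd ℂ) a
        - (b - (starRingEnd ℂ) c * a) * (starRingEnd ℂ) b) := by
      simp only [hz, inner_sub_left, inner_sub_right, inner_smul_left, inner_smul_right,
        huu, hvv, hxu, hxv, hvu, map_sub, _root_.map_mul, Complex.conj_ofReal,
        Complex.conj_conj]
      rw [hδ]
      ring
    have h0 : 0 ≤ (⟪z,z⟫).re := by
      have := inner_self_nonneg (𝕜 := ℂ) (x := z)
      rwa [RCLike.re_to_complex] at this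
    have hxx : ⟪x,x⟫ = ((‖x‖^2 : ℝ) : ℂ) := by
      rw [inner_self_eq_norm_sq_to_K]; norm_num
    have hre : (⟪z,z⟫).re = D * (D * ‖x‖^2 - (‖a‖^2 + ‖b‖^2
        - 2 * (c * b * (starRingEnd ℂ) a).re)) := by
      have h1 : a * (starRingEnd ℂ) a = ((‖a‖ : ℝ):ℂ)^2 := by
        rw [Complex.mul_conj]; norm_cast; exact (Complex.sq_norm a).symm
      have h2 : b * (starRingEnd ℂ) b = ((‖b‖ : ℝ):ℂ)^2 := by
        rw [Complex.mul_conj]; norm_cast; exact (Complex.sq_norm b).symm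
      have hw : ⟪z,z⟫ = ((D:ℝ):ℂ) * (((D * ‖x‖^2 - ‖a‖^2 - ‖b‖^2 : ℝ)):ℂ)
          + ((D:ℝ):ℂ) * ((c * b * (starRingEnd ℂ) a) + (starRingEnd ℂ) (c * b * (starRingEnd ℂ) a)) := by
        rw [hzz, hxx]
        push_cast
        simp only [map_sub, _root_.map_mul, Complex.conj_conj]
        linear_combination ((D:ℝ):ℂ) * (- h1 - h2)
      rw [hw]
      simp only [Complex.add_re, Complex.mul_re, Complex.ofReal_re, Complex.ofReal_im,
        Complex.add_im, Complex.conj_re, Complex.conj_im, Complex.add_re]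
      ring
    have hrle : (c * b * (starRingEnd ℂ) a).re ≤ ‖c‖ * ‖b‖ * ‖a‖ := by
      calc (c * b * (starRingEnd ℂ) a).re ≤ ‖c * b * (starRingEnd ℂ) a‖ :=
            Complex.re_le_norm _
        _ = ‖c‖ * ‖b‖ * ‖a‖ := by
            rw [norm_mul, norm_mul, Complex.norm_conj]
    rw [hre] at h0
    have hX : 0 ≤ D * ‖x‖^2 - (‖a‖^2 + ‖b‖^2
        - 2 * (c * b * (starRingEnd ℂ) a).re) := by nlinarith [h0, hD]
    linarith [hX, hrle]

set_option maxHeartbeats 1000000 in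
lemma key_ineq {u v : E} (hu : ‖u‖ = 1) (hv : ‖v‖ = 1) (x : E) :
    ‖⟪u,x⟫‖ ^ 2 - ‖⟪v,x⟫‖ ^ 2
      ≤ Real.sqrt (1 - ‖⟪u,v⟫‖ ^ 2) * ‖x‖ ^ 2 := by
  have hG := gram_aux hu hv x
  set α := ‖⟪u,x⟫‖ with hα
  set β := ‖⟪v,x⟫‖ with hβ
  set γ := ‖⟪u,v⟫‖ with hγd
  have hα0 : 0 ≤ α := norm_nonneg _
  have hβ0 : 0 ≤ β := norm_nonneg _
  have hγ0 : 0 ≤ γ := norm_nonneg _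
  have hγ1 : γ ≤ 1 := by
    have := norm_inner_le_norm (𝕜 := ℂ) u v
    rwa [hu, hv, mul_one, ← hγd] at this
  have hN0 : (0:ℝ) ≤ ‖x‖^2 := sq_nonneg _
  set N := ‖x‖^2 with hN
  set t := Real.sqrt (1 - γ^2) with ht
  have ht0 : 0 ≤ t := Real.sqrt_nonneg _
  have ht2 : t^2 = 1 - γ^2 := Real.sq_sqrt (by nlinarith)
  have hX : (α-β)^2 ≤ (1-γ^2)*N - 2*α*β*(1-γ) := by nlinarith [hG]
  have hY : (α+β)^2 ≤ (1-γ^2)*N + 2*α*β*(1+γ) := by nlinarith [hG]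
  have hX0 : 0 ≤ (1-γ^2)*N - 2*α*β*(1-γ) := le_trans (sq_nonneg _) hX
  have hXY : (α^2-β^2)^2 ≤ ((1-γ^2)*N - 2*α*β*(1-γ)) * ((1-γ^2)*N + 2*α*β*(1+γ)) := by
    have h := mul_le_mul hX hY (sq_nonneg _) hX0
    calc (α^2-β^2)^2 = (α-β)^2 * (α+β)^2 := by ring
      _ ≤ _ := h
  have hDγ : (0:ℝ) ≤ 1 - γ^2 := by nlinarith
  have hkey : (0:ℝ) ≤ (1-γ^2) * (γ*N - 2*α*β)^2 := mul_nonneg hDγ (sq_nonneg _)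
  have hfin : (α^2-β^2)^2 ≤ (1-γ^2)*N^2 := by nlinarith [hXY, hkey]
  have htN : 0 ≤ t*N := mul_nonneg ht0 hN0
  nlinarith [hfin, htN, ht2, sq_nonneg (α^2 - β^2 + t*N)]

lemma vecMulVec_mulVec' {n : ℕ} (u w x : Fin n → ℂ) :
    vecMulVec u w *ᵥ x = (w ⬝ᵥ x) • u := by
  ext i
  simp [mulVec, vecMulVec, dotProduct, Finset.mul_sum, mul_comm, mul_assoc, mul_left_comm]


end AuxLemmas

set_option maxHeartbeats 1000000 in
/-- For unit vectors `u, v ∈ ℂ^n`, the operator norm of `I + P_u − P_v` equals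
`1 + √(1 − |⟨u, v⟩|²)`. -/
theorem opNorm_one_add_proj_sub_proj
    {n : ℕ} (hn : 1 ≤ n) (u v : Fin n → ℂ)
    (hu : star u ⬝ᵥ u = 1) (hv : star v ⬝ᵥ v = 1) :
    opNorm (1 + vecMulVec u (star u) - vecMulVec v (star v))
      = 1 + Real.sqrt (1 - ‖star u ⬝ᵥ v‖ ^ 2) := by
  classical
  set A : Matrix (Fin n) (Fin n) ℂ := 1 + vecMulVec u (star u) - vecMulVec v (star v) with hA
  set T := Matrix.toEuclideanCLM (𝕜 := ℂ) A with hT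
  set u' : EuclideanSpace ℂ (Fin n) := (WithLp.equiv 2 (Fin n → ℂ)).symm u with hu'
  set v' : EuclideanSpace ℂ (Fin n) := (WithLp.equiv 2 (Fin n → ℂ)).symm v with hv'
  have huu' : ⟪u',u'⟫ = 1 := by
    rw [hu', WithLp.equiv_symm_apply, EuclideanSpace.inner_toLp_toLp, dotProduct_comm, hu]
  have hvv' : ⟪v',v'⟫ = 1 := by
    rw [hv', WithLp.equiv_symm_apply, EuclideanSpace.inner_toLp_toLp, dotProduct_comm, hv]
  have huv' : ⟪u',v'⟫ = star u ⬝ᵥ v := by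
    rw [hu', hv', WithLp.equiv_symm_apply, EuclideanSpace.inner_toLp_toLp, dotProduct_comm]
  have hnu : ‖u'‖ = 1 := by
    have h := inner_self_eq_norm_sq_to_K (𝕜 := ℂ) u'
    rw [huu'] at h
    have h2 : (‖u'‖:ℝ)^2 = 1 := Complex.ofReal_eq_one.mp (by push_cast; exact h.symm)
    rw [← Real.sqrt_sq (norm_nonneg u'), h2, Real.sqrt_one]
  have hnv : ‖v'‖ = 1 := by
    have h := inner_self_eq_norm_sq_to_K (𝕜 := ℂ) v'
    rw [hvv'] at h
    have h2 : (‖v'‖:ℝ)^2 = 1 := Complex.ofReal_eq_one.mp (by push_cast; exact h.symm)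
    rw [← Real.sqrt_sq (norm_nonneg v'), h2, Real.sqrt_one]
  set c : ℂ := star u ⬝ᵥ v with hc
  set γ : ℝ := ‖c‖ with hγ
  have hγ0 : 0 ≤ γ := norm_nonneg _
  have hγ1 : γ ≤ 1 := by
    have := norm_inner_le_norm (𝕜 := ℂ) u' v'
    rwa [huv', hnu, hnv, mul_one, ← hγ] at this
  set t : ℝ := Real.sqrt (1 - γ^2) with ht
  have ht0 : 0 ≤ t := Real.sqrt_nonneg _
  have ht2 : t^2 = 1 - γ^2 := Real.sq_sqrt (by nlinarith)
  have ht1 : t ≤ 1 := by nlinarith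
  clear_value u' v' c γ t
  -- quadratic form
  have Qf : ∀ x : EuclideanSpace ℂ (Fin n), ⟪T x, x⟫
      = ((‖x‖^2 + ‖⟪u',x⟫‖^2 - ‖⟪v',x⟫‖^2 : ℝ) : ℂ) := by
    intro x
    have hTx : ⟪T x, x⟫ = star (A *ᵥ (WithLp.equiv 2 (Fin n → ℂ) x)) ⬝ᵥ (WithLp.equiv 2 (Fin n → ℂ) x) := by
      rw [hT, EuclideanSpace.inner_eq_star_dotProduct, dotProduct_comm]
      rfl
    set w : Fin n → ℂ := WithLp.equiv 2 (Fin n → ℂ) x with hw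
    have hmul : A *ᵥ w = w + (star u ⬝ᵥ w) • u - (star v ⬝ᵥ w) • v := by
      rw [hA, sub_mulVec, add_mulVec, one_mulVec, vecMulVec_mulVec', vecMulVec_mulVec']
    have hux : ⟪u',x⟫ = star u ⬝ᵥ w := by
      rw [hu', hw, EuclideanSpace.inner_eq_star_dotProduct, dotProduct_comm]
      simp
    have hvx : ⟪v',x⟫ = star v ⬝ᵥ w := by
      rw [hv', hw, EuclideanSpace.inner_eq_star_dotProduct, dotProduct_comm]
      simp
    have hxx : star w ⬝ᵥ w = ((‖x‖^2 : ℝ) : ℂ) := by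
      rw [hw, dotProduct_comm]; change ⟪x,x⟫ = _
      rw [inner_self_eq_norm_sq_to_K]; norm_num
    rw [hTx, hmul]
    rw [star_sub, star_add, sub_dotProduct, add_dotProduct, star_smul, star_smul,
      smul_dotProduct, smul_dotProduct, hxx]
    rw [hux, hvx]
    have h1 : star (star u ⬝ᵥ w) * (star u ⬝ᵥ w) = ((‖star u ⬝ᵥ w‖ ^2 : ℝ):ℂ) := by
      rw [Complex.star_def, Complex.conj_mul']
      norm_cast
    have h2 : star (star v ⬝ᵥ w) * (star v ⬝ᵥ w) = ((‖star v ⬝ᵥ w‖ ^2 : ℝ):ℂ) := by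
      rw [Complex.star_def, Complex.conj_mul']
      norm_cast
    rw [smul_eq_mul, smul_eq_mul, h1, h2]
    push_cast
    ring
  -- positivity of T
  have hpos : T.IsPositive := by
    rw [ContinuousLinearMap.isPositive_iff_complex]
    intro x
    rw [Qf x]
    have hβ : ‖⟪v',x⟫‖ ≤ ‖x‖ := by
      have := norm_inner_le_norm (𝕜 := ℂ) v' x
      rwa [hnv, one_mul] at this
    have hβ0 : 0 ≤ ‖⟪v',x⟫‖ := norm_nonneg _
    constructor
    · simp only [RCLike.re_to_complex, Complex.ofReal_re]
    · simp only [RCLike.re_to_complex, Complex.ofReal_re]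
      nlinarith [norm_nonneg ⟪u',x⟫, norm_nonneg x]
  -- upper bound
  have hub : ‖T‖ ≤ 1 + t := by
    rw [CStarAlgebra.norm_le_iff_le_algebraMap T (by linarith)
      ((ContinuousLinearMap.nonneg_iff_isPositive T).mpr hpos)]
    rw [ContinuousLinearMap.le_def]
    rw [ContinuousLinearMap.isPositive_iff_complex]
    intro x
    have halg : (algebraMap ℝ (EuclideanSpace ℂ (Fin n) →L[ℂ] EuclideanSpace ℂ (Fin n)) (1+t)) x = (((1+t):ℝ):ℂ) • x := by
      rw [IsScalarTower.algebraMap_apply ℝ ℂ (EuclideanSpace ℂ (Fin n) →L[ℂ] EuclideanSpace ℂ (Fin n)), Algebra.algebraMap_eq_smul_one]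
      simp
    have hsub : ⟪(algebraMap ℝ (EuclideanSpace ℂ (Fin n) →L[ℂ] EuclideanSpace ℂ (Fin n)) (1+t) - T) x, x⟫
        = ((((1+t) * ‖x‖^2 - (‖x‖^2 + ‖⟪u',x⟫‖^2 - ‖⟪v',x⟫‖^2)) : ℝ) : ℂ) := by
      have hxx2 : ⟪x,x⟫ = ((‖x‖^2:ℝ):ℂ) := by
        rw [inner_self_eq_norm_sq_to_K]; norm_num
      rw [ContinuousLinearMap.sub_apply, inner_sub_left, halg, inner_smul_left, Qf x, hxx2]
      rw [Complex.conj_ofReal]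
      push_cast
      ring
    rw [hsub]
    have hkey := key_ineq hnu hnv x
    rw [huv', ← hγ, ← ht] at hkey
    constructor
    · simp only [RCLike.re_to_complex, Complex.ofReal_re]
    · simp only [RCLike.re_to_complex, Complex.ofReal_re]
      nlinarith [hkey]
  -- lower bound helper
  have hwit : ∀ y : EuclideanSpace ℂ (Fin n), y ≠ 0 → (1+t) * ‖y‖^2 ≤ (⟪T y, y⟫).re → 1 + t ≤ ‖T‖ := by
    intro y hy h
    have h1 : (⟪T y, y⟫).re ≤ ‖T y‖ * ‖y‖ := by
      refine le_trans (Complex.re_le_norm _) ?_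
      exact norm_inner_le_norm _ _
    have h2 : ‖T y‖ ≤ ‖T‖ * ‖y‖ := T.le_opNorm y
    have hy0 : 0 < ‖y‖ := norm_pos_iff.mpr hy
    have h3 : ‖T y‖ * ‖y‖ ≤ ‖T‖ * ‖y‖ * ‖y‖ := mul_le_mul_of_nonneg_right h2 hy0.le
    nlinarith [h, h1, h3, mul_pos hy0 hy0]
  have hvu' : ⟪v',u'⟫ = (starRingEnd ℂ) c := by
    rw [← inner_conj_symm, huv']
  -- lower bound
  have hlb : 1 + t ≤ ‖T‖ := by
    by_cases hγtop : γ = 1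
    · -- t = 0, witness u'
      have htz : t = 0 := by rw [ht, hγtop]; simp
      refine hwit u' (by intro h; rw [h] at hnu; simp at hnu) ?_
      rw [Qf u', huu', hvu']
      simp only [Complex.ofReal_re, _root_.map_one, Complex.norm_conj]
      rw [hnu, ← hγ, hγtop, htz]
      norm_num
    · by_cases hγbot : γ = 0
      · -- t = 1, witness u'
        have htz : t = 1 := by rw [ht, hγbot]; simp
        refine hwit u' (by intro h; rw [h] at hnu; simp at hnu) ?_
        rw [Qf u', huu', hvu']
        simp only [Complex.ofReal_re, _root_.map_one, Complex.norm_conj]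
        rw [hnu, ← hγ, hγbot, htz]
        norm_num
      · -- 0 < γ < 1, so 0 < t < 1
        have hγlt : γ < 1 := lt_of_le_of_ne hγ1 hγtop
        have hγgt : 0 < γ := lt_of_le_of_ne hγ0 (Ne.symm hγbot)
        have htpos : 0 < t := by rw [ht]; exact Real.sqrt_pos.mpr (by nlinarith)
        have htlt : t < 1 := by nlinarith
        set y : EuclideanSpace ℂ (Fin n) := c • u' + ((t:ℂ) - 1) • v' with hy
        have hiu : ⟪u',y⟫ = (t:ℂ) * c := by
          rw [hy, inner_add_right, inner_smul_right, inner_smul_right, huu', huv']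
          ring
        have hiv : ⟪v',y⟫ = (((t - t^2):ℝ):ℂ) := by
          rw [hy, inner_add_right, inner_smul_right, inner_smul_right, hvv', hvu']
          have : c * (starRingEnd ℂ) c = ((γ^2 : ℝ):ℂ) := by
            rw [Complex.mul_conj', hγ]
            norm_cast
          rw [this]
          have hγ2 : (γ:ℝ)^2 = 1 - t^2 := by nlinarith
          rw [hγ2]
          push_cast
          ring
        have hyy : ⟪y,y⟫ = (((2*t^2*(1-t)):ℝ):ℂ) := by
          rw [hy, inner_add_left, inner_smul_left, inner_smul_left, hiu, hiv]
          have : c * ((starRingEnd ℂ) c) = ((γ^2 : ℝ):ℂ) := by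
            rw [Complex.mul_conj', hγ]
            norm_cast
          have hγ2 : ((γ^2:ℝ):ℂ) = 1 - ((t:ℝ):ℂ)^2 := by
            have hr : γ^2 = 1 - t^2 := by nlinarith
            rw [hr]; push_cast; ring
          rw [map_sub, Complex.conj_ofReal, _root_.map_one]
          push_cast
          linear_combination ((t:ℂ)) * this + ((t:ℂ)) * hγ2 + this * 1 - hγ2 - this + hγ2
        have hny : ‖y‖^2 = 2*t^2*(1-t) := by
          have h : ⟪y,y⟫ = ((‖y‖^2:ℝ):ℂ) := by
            rw [inner_self_eq_norm_sq_to_K]; norm_num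
          rw [hyy] at h
          exact_mod_cast h.symm
        have hprod : (0:ℝ) < 2*t^2*(1-t) := by
          nlinarith [mul_pos (mul_pos htpos htpos) (sub_pos.mpr htlt)]
        have hy0 : y ≠ 0 := by
          intro h
          rw [h, norm_zero] at hny
          nlinarith [hprod, hny]
        refine hwit y hy0 ?_
        rw [Qf y, hiu, hiv]
        simp only [Complex.ofReal_re]
        have habs1 : ‖(t:ℂ) * c‖ = t * γ := by
          rw [norm_mul, Complex.norm_real, Real.norm_eq_abs, _root_.abs_of_nonneg ht0, hγ]
        have habs2 : ‖(((t - t^2 : ℝ)):ℂ)‖ = t - t^2 := by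
          rw [Complex.norm_real, Real.norm_eq_abs, _root_.abs_of_nonneg (show (0:ℝ) ≤ t - t^2 by nlinarith)]
        have hγ2' : γ^2 = 1 - t^2 := by nlinarith
        rw [habs1, habs2, hny, mul_pow, hγ2']
        ring_nf
        linarith
  -- conclusion
  have hfin : opNorm A = ‖T‖ := rfl
  rw [hfin]
  linarith [hub, hlb]
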